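/- Let ρ be a density matrix indexed by (Fin 2 × Fin 2) such that Tr((Tr_A ρ)²) = 1. Then all two-point correlations factorize: for all i, j ∈ {1, 2, 3}, Tr(ρ · (σ_i ⊗ σ_j)) = Tr(ρ · (σ_i ⊗ I₂)) · Tr(ρ · (I₂ ⊗ σ_j)), and all these traces are real numbers. (In coherence-vector notation this reads v^{AB} = 2 · v^A ⊗ v^B.) -/

import Mathlib

open ComplexOrder Kronecker

/-- A density matrix: Hermitian, positive semidefinite, trace one. -/
def IsDensityMatrix {n : Type*} [Fintype n] [DecidableEq n] (ρ : Matrix n n ℂ) : Prop :=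
  ρ.IsHermitian ∧ ρ.PosSemidef ∧ ρ.trace = 1

/-- Partial trace over the first factor. -/
noncomputable def ptraceA {nA nB : ℕ} (M : Matrix (Fin nA × Fin nB) (Fin nA × Fin nB) ℂ) :
    Matrix (Fin nB) (Fin nB) ℂ :=
  Matrix.of fun j j' => ∑ i, M (i, j) (i, j')

/-- The Pauli matrices σ₁, σ₂, σ₃. -/
def σ : Fin 3 → Matrix (Fin 2) (Fin 2) ℂ
  | 0 => !![0, 1; 1, 0]
  | 1 => !![0, -Complex.I; Complex.I, 0]
  | 2 => !![1, 0; 0, -1]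

open Matrix in
lemma aux_trace_conjTranspose_mul_self_eq_zero {n : Type*} [Fintype n]
    {D : Matrix n n ℂ} (h : (Dᴴ * D).trace = 0) : D = 0 := by
  have hd : ∀ j, (Dᴴ * D) j j = 0 := by
    have := Fintype.sum_eq_zero_iff_of_nonneg (f := fun j => (Dᴴ * D) j j) ?_ |>.mp h
    · intro j; exact congrFun this j
    · intro j
      simpa [Matrix.mul_apply] using Finset.sum_nonneg fun i _ =>
        star_mul_self_nonneg (D i j)
  ext i j
  have := hd j
  rw [Matrix.mul_apply] at this
  have h2 := (Fintype.sum_eq_zero_iff_of_nonneg (f := fun i => (Dᴴ) j i * D i j) ?_).mp this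
  · have := congrFun h2 i
    simp [Matrix.conjTranspose_apply] at this
    simpa using this
  · intro i; simpa [Matrix.conjTranspose_apply] using star_mul_self_nonneg (D i j)

open Matrix in
lemma aux_kron_conjTranspose {l m n p : Type*} (A : Matrix l m ℂ) (B : Matrix n p ℂ) :
    (A ⊗ₖ B)ᴴ = Aᴴ ⊗ₖ Bᴴ := by
  ext ⟨i, j⟩ ⟨k, l⟩
  simp [Matrix.conjTranspose_apply, Matrix.kronecker_apply]

open Matrix in
lemma aux_kron_sub {l m n p : Type*} (A : Matrix l m ℂ) (B C : Matrix n p ℂ) :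
    A ⊗ₖ (B - C) = A ⊗ₖ B - A ⊗ₖ C := by
  ext ⟨i, j⟩ ⟨k, l⟩
  simp [Matrix.kronecker_apply, mul_sub]

lemma aux_ptrace_pair (ρ : Matrix (Fin 2 × Fin 2) (Fin 2 × Fin 2) ℂ)
    (M : Matrix (Fin 2) (Fin 2) ℂ) :
    (ρ * ((1 : Matrix (Fin 2) (Fin 2) ℂ) ⊗ₖ M)).trace = (ptraceA ρ * M).trace := by
  simp only [Matrix.trace, Matrix.diag, Matrix.mul_apply, Matrix.kronecker_apply,
    Matrix.one_apply, Fintype.sum_prod_type, Fin.sum_univ_two, ptraceA, Matrix.of_apply]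
  simp
  ring

lemma aux_trace_ptrace (ρ : Matrix (Fin 2 × Fin 2) (Fin 2 × Fin 2) ℂ) :
    (ptraceA ρ).trace = ρ.trace := by
  simp only [Matrix.trace, Matrix.diag, ptraceA, Matrix.of_apply, Fintype.sum_prod_type,
    Fin.sum_univ_two]
  ring

lemma aux_det2_zero (B : Matrix (Fin 2) (Fin 2) ℂ) (htr : B.trace = 1)
    (hsq : (B * B).trace = 1) : B 0 0 * B 1 1 - B 0 1 * B 1 0 = 0 := by
  simp only [Matrix.trace, Matrix.diag, Matrix.mul_apply, Fin.sum_univ_two] at htr hsq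
  linear_combination (B 0 0 + B 1 1 + 1) / 2 * htr - hsq / 2

lemma aux_proj2_mul_self (B : Matrix (Fin 2) (Fin 2) ℂ) (htr : B.trace = 1)
    (hdet : B 0 0 * B 1 1 - B 0 1 * B 1 0 = 0) : B * B = B := by
  simp only [Matrix.trace, Matrix.diag, Fin.sum_univ_two] at htr
  ext i j
  fin_cases i <;> fin_cases j <;>
    simp only [Matrix.mul_apply, Fin.sum_univ_two, Fin.isValue, Fin.mk_zero, Fin.mk_one] <;>
    linear_combination (norm := ring_nf) ?_
  · linear_combination B 0 0 * htr - hdet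
  · linear_combination B 0 1 * htr
  · linear_combination B 1 0 * htr
  · linear_combination B 1 1 * htr - hdet

lemma aux_proj2_sandwich (B M : Matrix (Fin 2) (Fin 2) ℂ)
    (hdet : B 0 0 * B 1 1 - B 0 1 * B 1 0 = 0) :
    B * M * B = (B * M).trace • B := by
  ext i j
  fin_cases i <;> fin_cases j <;>
    simp only [Matrix.mul_apply, Matrix.smul_apply, Matrix.trace, Matrix.diag,
      Fin.sum_univ_two, Fin.isValue, Fin.mk_zero, Fin.mk_one, smul_eq_mul]
  · linear_combination (- M 1 1) * hdet
  · linear_combination M 0 1 * hdet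
  · linear_combination M 1 0 * hdet
  · linear_combination (- M 0 0) * hdet

lemma aux_proj_compl {n : Type*} [Fintype n] [DecidableEq n] (B : Matrix n n ℂ)
    (h : B * B = B) : (1 - B) * (1 - B) = 1 - B := by
  rw [sub_mul, mul_sub, mul_sub, one_mul, one_mul, mul_one, h]
  abel

open Matrix in
/-- If the reduced state of the second qubit is pure, then all two-point correlations
factorize (v^{AB} = 2 v^A ⊗ v^B in coherence-vector notation), and the involved traces
are real. -/
theorem correlations_factorize_of_reduced_pure (ρ : Matrix (Fin 2 × Fin 2) (Fin 2 × Fin 2) ℂ)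
    (hρ : IsDensityMatrix ρ)
    (hpure : (ptraceA ρ * ptraceA ρ).trace = 1) :
    ∀ i j : Fin 3,
      ((ρ * (σ i ⊗ₖ σ j)).trace).im = 0 ∧
      ((ρ * (σ i ⊗ₖ (1 : Matrix (Fin 2) (Fin 2) ℂ))).trace).im = 0 ∧
      ((ρ * ((1 : Matrix (Fin 2) (Fin 2) ℂ) ⊗ₖ σ j)).trace).im = 0 ∧
      (ρ * (σ i ⊗ₖ σ j)).trace =
        (ρ * (σ i ⊗ₖ (1 : Matrix (Fin 2) (Fin 2) ℂ))).trace *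
          (ρ * ((1 : Matrix (Fin 2) (Fin 2) ℂ) ⊗ₖ σ j)).trace := by
  obtain ⟨hH, hPSD, htr⟩ := hρ
  have hH' : ρᴴ = ρ := hH
  set B : Matrix (Fin 2) (Fin 2) ℂ := ptraceA ρ with hBdef
  -- basic facts about B
  have hBH : Bᴴ = B := by
    ext j j'
    simp only [Matrix.conjTranspose_apply, hBdef, ptraceA, Matrix.of_apply, star_sum]
    refine Finset.sum_congr rfl fun i _ => ?_
    have h1 : ρᴴ (i, j) (i, j') = ρ (i, j) (i, j') := by rw [hH']
    rw [Matrix.conjTranspose_apply] at h1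
    exact h1
  have hBtr : B.trace = 1 := by rw [hBdef, aux_trace_ptrace, htr]
  have hdet : B 0 0 * B 1 1 - B 0 1 * B 1 0 = 0 := aux_det2_zero B hBtr hpure
  have hBB : B * B = B := aux_proj2_mul_self B hBtr hdet
  -- the projection onto the complement and its Kronecker lift
  set P : Matrix (Fin 2) (Fin 2) ℂ := 1 - B with hPdef
  set Q : Matrix (Fin 2 × Fin 2) (Fin 2 × Fin 2) ℂ :=
    (1 : Matrix (Fin 2) (Fin 2) ℂ) ⊗ₖ P with hQdef
  have hPH : Pᴴ = P := by rw [hPdef, Matrix.conjTranspose_sub, Matrix.conjTranspose_one, hBH]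
  have hQH : Qᴴ = Q := by rw [hQdef, aux_kron_conjTranspose, Matrix.conjTranspose_one, hPH]
  have hPP : P * P = P := by
    rw [hPdef, aux_proj_compl B hBB]
  have hQQ : Q * Q = Q := by
    rw [hQdef, ← Matrix.mul_kronecker_mul, one_mul, hPP]
  have hBP : B * P = 0 := by rw [hPdef, mul_sub, mul_one, hBB, sub_self]
  have hQ0 : (ρ * Q).trace = 0 := by
    rw [hQdef, aux_ptrace_pair, ← hBdef, hBP, Matrix.trace_zero]
  -- ρ * Q = 0
  have hρQ : ρ * Q = 0 := by
    obtain ⟨C, hC⟩ : ∃ C : Matrix (Fin 2 × Fin 2) (Fin 2 × Fin 2) ℂ, ρ = Cᴴ * C := by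
      open scoped MatrixOrder in
      exact CStarAlgebra.nonneg_iff_eq_star_mul_self.mp hPSD.nonneg
    have hD : C * Q = 0 := by
      apply aux_trace_conjTranspose_mul_self_eq_zero
      have e1 : (C * Q)ᴴ * (C * Q) = Q * (ρ * Q) := by
        rw [Matrix.conjTranspose_mul, hQH, hC]
        noncomm_ring
      rw [e1, Matrix.trace_mul_comm, mul_assoc, hQQ, hQ0]
    rw [hC, mul_assoc, hD, mul_zero]
  have hρB : ρ * ((1 : Matrix (Fin 2) (Fin 2) ℂ) ⊗ₖ B) = ρ := by
    have e1 : Q = 1 - ((1 : Matrix (Fin 2) (Fin 2) ℂ) ⊗ₖ B) := by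
      rw [hQdef, hPdef, aux_kron_sub, Matrix.one_kronecker_one]
    rw [e1, mul_sub, mul_one, sub_eq_zero] at hρQ
    exact hρQ.symm
  have hBρ : ((1 : Matrix (Fin 2) (Fin 2) ℂ) ⊗ₖ B) * ρ = ρ := by
    have := congrArg Matrix.conjTranspose hρB
    rwa [Matrix.conjTranspose_mul, aux_kron_conjTranspose, Matrix.conjTranspose_one, hBH, hH']
      at this
  -- Pauli matrices are Hermitian
  have hσH : ∀ k : Fin 3, (σ k)ᴴ = σ k := by
    intro k
    fin_cases k <;> (ext a b; fin_cases a <;> fin_cases b <;>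
      simp [σ, Matrix.conjTranspose_apply])
  -- realness of traces against Hermitian observables
  have hreal : ∀ M : Matrix (Fin 2 × Fin 2) (Fin 2 × Fin 2) ℂ, Mᴴ = M →
      ((ρ * M).trace).im = 0 := by
    intro M hM
    have h1 : starRingEnd ℂ ((ρ * M).trace) = (ρ * M).trace := by
      have h2 : ((ρ * M)ᴴ).trace = starRingEnd ℂ ((ρ * M).trace) := by
        rw [Matrix.trace_conjTranspose]; rfl
      rw [← h2, Matrix.conjTranspose_mul, hM, hH', Matrix.trace_mul_comm]
    exact Complex.conj_eq_iff_im.mp h1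
  intro i j
  refine ⟨hreal _ ?_, hreal _ ?_, hreal _ ?_, ?_⟩
  · rw [aux_kron_conjTranspose, hσH, hσH]
  · rw [aux_kron_conjTranspose, hσH, Matrix.conjTranspose_one]
  · rw [aux_kron_conjTranspose, hσH, Matrix.conjTranspose_one]
  -- factorization
  set c : ℂ := (B * σ j).trace with hcdef
  have h1 : (ρ * ((1 : Matrix (Fin 2) (Fin 2) ℂ) ⊗ₖ σ j)).trace = c := by
    rw [aux_ptrace_pair, ← hBdef, hcdef]
  have h2 : (ρ * (σ i ⊗ₖ (1 : Matrix (Fin 2) (Fin 2) ℂ))).trace =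
      (ρ * (σ i ⊗ₖ B)).trace := by
    conv_lhs => rw [← hρB]
    rw [mul_assoc, ← Matrix.mul_kronecker_mul, one_mul, mul_one]
  have hρ2 : ρ = ((1 : Matrix (Fin 2) (Fin 2) ℂ) ⊗ₖ B) * ρ *
      ((1 : Matrix (Fin 2) (Fin 2) ℂ) ⊗ₖ B) := by
    rw [mul_assoc, hρB, hBρ]
  have hBσB : B * σ j * B = c • B := aux_proj2_sandwich B (σ j) hdet
  have h3 : (ρ * (σ i ⊗ₖ σ j)).trace = c * (ρ * (σ i ⊗ₖ B)).trace := by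
    conv_lhs => rw [hρ2]
    rw [show ((1 : Matrix (Fin 2) (Fin 2) ℂ) ⊗ₖ B) * ρ * ((1 : Matrix (Fin 2) (Fin 2) ℂ) ⊗ₖ B) *
        (σ i ⊗ₖ σ j) =
        ((1 : Matrix (Fin 2) (Fin 2) ℂ) ⊗ₖ B) *
          (ρ * (((1 : Matrix (Fin 2) (Fin 2) ℂ) ⊗ₖ B) * (σ i ⊗ₖ σ j))) by noncomm_ring]
    rw [Matrix.trace_mul_comm, mul_assoc, ← Matrix.mul_kronecker_mul,
      ← Matrix.mul_kronecker_mul, one_mul, mul_one, hBσB, Matrix.kronecker_smul,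
      mul_smul_comm, Matrix.trace_smul, smul_eq_mul]
  rw [h1, h2, h3, mul_comm]
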